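/- Let V be a real Hilbert space, let N be a positive integer, and let u_1, …, u_N and v_1, …, v_N be vectors in V. Assume there are constants C > 0 and ε ≥ 0 such that for all α ∈ ℝ^N: ‖∑_{i=1}^N α_i u_i‖² ≤ C‖α‖², ‖∑_{i=1}^N α_i v_i‖² ≤ C‖α‖², and ‖∑_{i=1}^N α_i (u_i − v_i)‖² ≤ ε²‖α‖². Let G_u and G_v be the Gram matrices (G_u)_{ij} = ⟪u_i, u_j⟫ and (G_v)_{ij} = ⟪v_i, v_j⟫. Then ‖G_u − G_v‖₂ ≤ 2·ε·√C. -/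

import Mathlib

open scoped RealInnerProductSpace

/-- The spectral norm (ℓ²-operator norm) of a real rectangular matrix. -/
noncomputable def l2OpNorm {m n : Type*} [Fintype m] [Fintype n] [DecidableEq n]
    (M : Matrix m n ℝ) : ℝ :=
  ‖LinearMap.toContinuousLinearMap (Matrix.toEuclideanLin M)‖

lemma inner_sum_smul_sum_smul {V : Type*} [NormedAddCommGroup V] [InnerProductSpace ℝ V]
    {N : ℕ} (w z : Fin N → V) (β α : Fin N → ℝ) :
    ⟪∑ i, β i • w i, ∑ j, α j • z j⟫ = ∑ i, ∑ j, β i * α j * ⟪w i, z j⟫ := by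
  rw [sum_inner]
  refine Finset.sum_congr rfl fun i _ => ?_
  rw [inner_sum]
  refine Finset.sum_congr rfl fun j _ => ?_
  rw [real_inner_smul_left, real_inner_smul_right]; ring

/-- Gram-matrix perturbation: if the synthesis operators of `(u_i)` and `(v_i)` are bounded
by `√C` and the synthesis operator of the difference is bounded by `ε`, then the Gram
matrices differ by at most `2ε√C` in spectral norm. -/
theorem gram_matrix_perturbation
    {V : Type*} [NormedAddCommGroup V] [InnerProductSpace ℝ V]
    {N : ℕ} (hN : 0 < N) (u v : Fin N → V) (C ε : ℝ) (hC : 0 < C) (hε : 0 ≤ ε)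
    (hu : ∀ α : Fin N → ℝ, ‖∑ i, α i • u i‖ ^ 2 ≤ C * ∑ i, α i ^ 2)
    (hv : ∀ α : Fin N → ℝ, ‖∑ i, α i • v i‖ ^ 2 ≤ C * ∑ i, α i ^ 2)
    (hdiff : ∀ α : Fin N → ℝ, ‖∑ i, α i • (u i - v i)‖ ^ 2 ≤ ε ^ 2 * ∑ i, α i ^ 2)
    (Gu Gv : Matrix (Fin N) (Fin N) ℝ)
    (hGu : ∀ i j, Gu i j = ⟪u i, u j⟫) (hGv : ∀ i j, Gv i j = ⟪v i, v j⟫) :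
    l2OpNorm (Gu - Gv) ≤ 2 * ε * Real.sqrt C := by
  -- Norm of Euclidean vectors as sum of squares
  have hnorm : ∀ x : EuclideanSpace ℝ (Fin N), ∑ i, (x i) ^ 2 = ‖x‖ ^ 2 := by
    intro x
    rw [← real_inner_self_eq_norm_sq, PiLp.inner_apply]
    simp [RCLike.inner_apply, sq]
  -- synthesis operator bounds
  have hSu : ∀ x : EuclideanSpace ℝ (Fin N), ‖∑ i, x i • u i‖ ≤ Real.sqrt C * ‖x‖ := by
    intro x
    have h := hu x
    rw [hnorm x] at h
    have := Real.sqrt_le_sqrt h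
    rwa [Real.sqrt_sq (norm_nonneg _), Real.sqrt_mul hC.le, Real.sqrt_sq (norm_nonneg _)] at this
  have hSv : ∀ x : EuclideanSpace ℝ (Fin N), ‖∑ i, x i • v i‖ ≤ Real.sqrt C * ‖x‖ := by
    intro x
    have h := hv x
    rw [hnorm x] at h
    have := Real.sqrt_le_sqrt h
    rwa [Real.sqrt_sq (norm_nonneg _), Real.sqrt_mul hC.le, Real.sqrt_sq (norm_nonneg _)] at this
  have hSd : ∀ x : EuclideanSpace ℝ (Fin N),
      ‖(∑ i, x i • u i) - ∑ i, x i • v i‖ ≤ ε * ‖x‖ := by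
    intro x
    have h := hdiff x
    rw [hnorm x] at h
    have hrw : ∑ i, x i • (u i - v i) = (∑ i, x i • u i) - ∑ i, x i • v i := by
      rw [← Finset.sum_sub_distrib]
      exact Finset.sum_congr rfl fun i _ => smul_sub _ _ _
    rw [hrw] at h
    have := Real.sqrt_le_sqrt h
    rwa [Real.sqrt_sq (norm_nonneg _), Real.sqrt_mul (sq_nonneg ε), Real.sqrt_sq hε,
      Real.sqrt_sq (norm_nonneg _)] at this
  -- key bilinear bound
  have key : ∀ β α : EuclideanSpace ℝ (Fin N),
      ∑ i, ∑ j, β i * (Gu - Gv) i j * α j ≤ 2 * ε * Real.sqrt C * ‖β‖ * ‖α‖ := by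
    intro β α
    have hsum : ∑ i, ∑ j, β i * (Gu - Gv) i j * α j
        = ⟪∑ i, β i • u i, ∑ j, α j • u j⟫ - ⟪∑ i, β i • v i, ∑ j, α j • v j⟫ := by
      rw [inner_sum_smul_sum_smul, inner_sum_smul_sum_smul, ← Finset.sum_sub_distrib]
      refine Finset.sum_congr rfl fun i _ => ?_
      rw [← Finset.sum_sub_distrib]
      refine Finset.sum_congr rfl fun j _ => ?_
      simp [Matrix.sub_apply, hGu, hGv]; ring
    have hsplit : ⟪∑ i, β i • u i, ∑ j, α j • u j⟫ - ⟪∑ i, β i • v i, ∑ j, α j • v j⟫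
        = ⟪(∑ i, β i • u i) - ∑ i, β i • v i, ∑ j, α j • u j⟫
          + ⟪∑ i, β i • v i, (∑ j, α j • u j) - ∑ j, α j • v j⟫ := by
      rw [inner_sub_left, inner_sub_right]; ring
    rw [hsum, hsplit]
    have h1 : ⟪(∑ i, β i • u i) - ∑ i, β i • v i, ∑ j, α j • u j⟫
        ≤ (ε * ‖β‖) * (Real.sqrt C * ‖α‖) := by
      calc _ ≤ ‖(∑ i, β i • u i) - ∑ i, β i • v i‖ * ‖∑ j, α j • u j‖ :=
            real_inner_le_norm _ _
        _ ≤ (ε * ‖β‖) * (Real.sqrt C * ‖α‖) :=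
            mul_le_mul (hSd β) (hSu α) (norm_nonneg _)
              (by positivity)
    have h2 : ⟪∑ i, β i • v i, (∑ j, α j • u j) - ∑ j, α j • v j⟫
        ≤ (Real.sqrt C * ‖β‖) * (ε * ‖α‖) := by
      calc _ ≤ ‖∑ i, β i • v i‖ * ‖(∑ j, α j • u j) - ∑ j, α j • v j‖ :=
            real_inner_le_norm _ _
        _ ≤ (Real.sqrt C * ‖β‖) * (ε * ‖α‖) :=
            mul_le_mul (hSv β) (hSd α) (norm_nonneg _) (by positivity)
    nlinarith [h1, h2]
  -- conclude via operator norm bound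
  rw [l2OpNorm]
  apply ContinuousLinearMap.opNorm_le_bound _ (by positivity)
  intro x
  set y : EuclideanSpace ℝ (Fin N) :=
    LinearMap.toContinuousLinearMap (Matrix.toEuclideanLin (Gu - Gv)) x with hy
  have hyx : ‖y‖ ^ 2 ≤ 2 * ε * Real.sqrt C * ‖y‖ * ‖x‖ := by
    have hinner : ‖y‖ ^ 2 = ∑ i, ∑ j, y i * (Gu - Gv) i j * x j := by
      rw [← real_inner_self_eq_norm_sq, PiLp.inner_apply]
      have hyi : ∀ i, y i = ∑ j, (Gu - Gv) i j * x j := by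
        intro i
        simp only [hy, LinearMap.coe_toContinuousLinearMap', Matrix.toEuclideanLin_apply]
        rfl
      simp only [RCLike.inner_apply, conj_trivial]
      refine Finset.sum_congr rfl fun i _ => ?_
      have h2 : y i * y i = y i * ∑ j, (Gu - Gv) i j * x j := by rw [← hyi i]
      rw [h2, Finset.mul_sum]
      exact Finset.sum_congr rfl fun j _ => by ring
    rw [hinner]
    exact key y x
  rcases eq_or_lt_of_le (norm_nonneg y) with h0 | h0
  · rw [← h0]; positivity
  · have := le_of_mul_le_mul_right (by nlinarith [hyx] : ‖y‖ * ‖y‖ ≤ (2 * ε * Real.sqrt C * ‖x‖) * ‖y‖) h0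
    linarith
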